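/- Let G be a complete multipartite graph on n vertices whose largest part has size m. Then G is Hamiltonian if and only if m ≤ n/2. -/

import Mathlib

set_option maxRecDepth 2000

namespace CMPHam

variable {α : Type}

/-- Build a walk following `f 0, f 1, ..., f k`. -/
def buildW (G : SimpleGraph α) (f : ℕ → α) (hadj : ∀ k, G.Adj (f k) (f (k+1))) :
    (k : ℕ) → G.Walk (f 0) (f k)
  | 0 => SimpleGraph.Walk.nil
  | (k+1) => (buildW G f hadj k).concat (hadj k)

lemma buildW_length (G : SimpleGraph α) (f : ℕ → α) (hadj : ∀ k, G.Adj (f k) (f (k+1))) (k : ℕ) :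
    (buildW G f hadj k).length = k := by
  induction k with
  | zero => rfl
  | succ k ih => simp [buildW, SimpleGraph.Walk.length_concat, ih]

lemma buildW_support (G : SimpleGraph α) (f : ℕ → α) (hadj : ∀ k, G.Adj (f k) (f (k+1))) (k : ℕ) :
    (buildW G f hadj k).support = (List.range (k+1)).map f := by
  induction k with
  | zero => simp [buildW, List.range_succ]
  | succ k ih => simp [buildW, ih, List.range_succ, List.concat_eq_append]

lemma buildW_edges (G : SimpleGraph α) (f : ℕ → α) (hadj : ∀ k, G.Adj (f k) (f (k+1))) (k : ℕ) :
    (buildW G f hadj k).edges = (List.range k).map (fun i => s(f i, f (i+1))) := by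
  induction k with
  | zero => simp [buildW]
  | succ k ih => simp [buildW, ih, List.range_succ, List.concat_eq_append]

lemma getElem_idx_congr {l : List α} {i j : ℕ} (h : i = j) (hi : i < l.length) :
    l[i] = l[j]'(h ▸ hi) := by subst h; rfl

lemma mod_succ_inj {n a b : ℕ} (ha : a < n) (hb : b < n) (h : (a+1) % n = (b+1) % n) : a = b := by
  have e1 : (a+1) % n = if a+1 = n then 0 else a+1 := by
    split
    · simp [*]
    · exact Nat.mod_eq_of_lt (by omega)
  have e2 : (b+1) % n = if b+1 = n then 0 else b+1 := by
    split
    · simp [*]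
    · exact Nat.mod_eq_of_lt (by omega)
  rw [e1, e2] at h
  split at h <;> split at h <;> omega

theorem isHamiltonian_of_cycleFn [Fintype α] [DecidableEq α] {G : SimpleGraph α} {n : ℕ}
    (hn : Fintype.card α = n) (h3 : 3 ≤ n) (f : ℕ → α)
    (hinj : ∀ a b, a < n → b < n → f a = f b → a = b)
    (hsurj : ∀ x, ∃ k, k < n ∧ f k = x)
    (hadj : ∀ k, k < n → G.Adj (f k) (f ((k+1) % n))) :
    G.IsHamiltonian := by
  have hn0 : 0 < n := by omega
  set g : ℕ → α := fun k => f (k % n) with hg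
  have hmodsucc : ∀ k : ℕ, (k + 1) % n = (k % n + 1) % n := by
    intro k
    conv_lhs => rw [Nat.add_mod, Nat.mod_eq_of_lt (show 1 < n by omega)]
  have hadj' : ∀ k, G.Adj (g k) (g (k+1)) := by
    intro k
    have h := hadj (k % n) (Nat.mod_lt _ hn0)
    show G.Adj (f (k % n)) (f ((k+1) % n))
    rw [hmodsucc k]
    exact h
  have hgn : g n = g 0 := by simp [hg, Nat.mod_self]
  set p : G.Walk (g 0) (g 0) := (buildW G g hadj' n).copy rfl hgn with hp
  have hginj : ∀ a b, a < n → b < n → g a = g b → a = b := by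
    intro a b ha hb h
    exact hinj a b ha hb (by simpa [hg, Nat.mod_eq_of_lt ha, Nat.mod_eq_of_lt hb] using h)
  have hsupp : p.support = (List.range (n+1)).map g := by
    rw [hp, SimpleGraph.Walk.support_copy, buildW_support]
  have htail : p.support.tail = (List.range n).map (fun k => g (k+1)) := by
    rw [hsupp, List.range_succ_eq_map]
    simp [List.map_map, Function.comp]
  have htail_nodup : (p.support.tail).Nodup := by
    rw [htail]
    refine List.Nodup.map_on ?_ List.nodup_range
    intro a ha b hb hfe
    simp only [List.mem_range] at ha hb
    have h1 : (a+1) % n < n := Nat.mod_lt _ hn0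
    have h2 : (b+1) % n < n := Nat.mod_lt _ hn0
    have : (a+1) % n = (b+1) % n := by
      refine hginj _ _ h1 h2 ?_
      show f ((a+1) % n % n) = f ((b+1) % n % n)
      rw [Nat.mod_mod_of_dvd _ dvd_rfl, Nat.mod_mod_of_dvd _ dvd_rfl]
      exact hfe
    exact mod_succ_inj ha hb this
  have hmem : ∀ x, x ∈ p.support.tail := by
    intro x
    obtain ⟨k₀, hk₀, hfk⟩ := hsurj x
    rw [htail]
    rcases Nat.eq_zero_or_pos k₀ with h0 | h0
    · refine List.mem_map.2 ⟨n-1, List.mem_range.2 (by omega), ?_⟩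
      show f ((n-1+1) % n) = x
      rw [show n-1+1 = n from by omega, Nat.mod_self, ← h0]
      exact hfk
    · refine List.mem_map.2 ⟨k₀-1, List.mem_range.2 (by omega), ?_⟩
      show f ((k₀-1+1) % n) = x
      rw [show k₀-1+1 = k₀ from by omega, Nat.mod_eq_of_lt hk₀]
      exact hfk
  have hcount : ∀ x, p.support.tail.count x = 1 :=
    fun x => List.count_eq_one_of_mem htail_nodup (hmem x)
  have hedges : p.edges = (List.range n).map (fun i => s(g i, g (i+1))) := by
    rw [hp, SimpleGraph.Walk.edges_copy, buildW_edges]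
  have hgkey : ∀ a b, a < n → b < n → g a = g (b+1) → a = (b+1) % n := by
    intro a b ha hb h
    refine hginj a ((b+1) % n) ha (Nat.mod_lt _ hn0) ?_
    rw [h]
    show f ((b+1) % n) = f ((b+1) % n % n)
    rw [Nat.mod_mod_of_dvd _ dvd_rfl]
  have hedge_nodup : p.edges.Nodup := by
    rw [hedges]
    refine List.Nodup.map_on ?_ List.nodup_range
    intro i hi j hj he
    simp only [List.mem_range] at hi hj
    rw [Sym2.eq_iff] at he
    rcases he with ⟨h1, _⟩ | ⟨h1, h2⟩
    · exact hginj i j hi hj h1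
    · exfalso
      have hA : i = (j+1) % n := hgkey i j hi hj h1
      have hB : j = (i+1) % n := (hgkey j i hj hi h2.symm)
      have e1 : (j+1) % n = if j+1 = n then 0 else j+1 := by
        split
        · rename_i hh; rw [hh, Nat.mod_self]
        · exact Nat.mod_eq_of_lt (by omega)
      have e2 : (i+1) % n = if i+1 = n then 0 else i+1 := by
        split
        · rename_i hh; rw [hh, Nat.mod_self]
        · exact Nat.mod_eq_of_lt (by omega)
      rw [e1] at hA; rw [e2] at hB
      split at hA <;> split at hB <;> omega
  have hplen : p.length = n := by
    rw [hp, SimpleGraph.Walk.length_copy, buildW_length]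
  have hne : p ≠ SimpleGraph.Walk.nil := by
    intro h
    rw [h] at hplen
    simp at hplen
    omega
  intro _
  refine ⟨g 0, p, ?_⟩
  rw [SimpleGraph.Walk.isHamiltonianCycle_iff_isCycle_and_support_count_tail_eq_one]
  exact ⟨⟨⟨⟨hedge_nodup⟩, hne⟩, htail_nodup⟩, hcount⟩

theorem exists_cycleFn_of_isHamiltonian [Fintype α] [DecidableEq α] {G : SimpleGraph α} {n : ℕ}
    (hn : Fintype.card α = n) (h3 : 3 ≤ n) (hG : G.IsHamiltonian) :
    ∃ f : ℕ → α, (∀ a b, a < n → b < n → f a = f b → a = b) ∧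
      (∀ x, ∃ k, k < n ∧ f k = x) ∧ (∀ k, k < n → G.Adj (f k) (f ((k+1) % n))) := by
  obtain ⟨a, p, hp⟩ := hG (by omega)
  have hlen : p.support.tail.length = n := by
    have h1 := hp.length_eq
    have h2 : p.support.length = p.length + 1 := SimpleGraph.Walk.length_support p
    have h3' : p.support.tail.length = p.support.length - 1 := List.length_tail
    omega
  have hcount := (SimpleGraph.Walk.isHamiltonianCycle_iff_isCycle_and_support_count_tail_eq_one.mp hp).2
  have hnodup : p.support.tail.Nodup :=
    List.nodup_iff_count_le_one.mpr (fun x => (hcount x).le)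
  have hmem : ∀ x, x ∈ p.support.tail := by
    intro x
    have := hcount x
    exact List.count_pos_iff.mp (by omega)
  refine ⟨fun t => p.support.tail.getD t a, ?_, ?_, ?_⟩
  · intro i j hi hj hij
    simp only at hij
    rw [List.getD_eq_getElem _ _ (by omega), List.getD_eq_getElem _ _ (by omega)] at hij
    exact (List.Nodup.getElem_inj_iff hnodup).mp hij
  · intro x
    obtain ⟨k, hk, hkx⟩ := List.mem_iff_getElem.mp (hmem x)
    exact ⟨k, by omega, by show p.support.tail.getD k a = x
                           rw [List.getD_eq_getElem _ _ hk]; exact hkx⟩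
  · intro k hk
    show G.Adj (p.support.tail.getD k a) (p.support.tail.getD ((k+1) % n) a)
    have hchain : List.Chain' G.Adj p.support := SimpleGraph.Walk.isChain_adj_support p
    have hconseq : ∀ i (h : i + 1 < p.support.length),
        G.Adj p.support[i] p.support[i+1] := by
      intro i h
      have := List.isChain_iff_getElem.mp hchain i (by omega)
      simpa [List.get_eq_getElem] using this
    have hsupl : p.support.length = n + 1 := by
      have : p.support.tail.length = p.support.length - 1 := List.length_tail
      have := p.support_ne_nil
      have : 0 < p.support.length := List.length_pos_iff.mpr this
      omega
    have hsc : p.support = a :: p.support.tail := SimpleGraph.Walk.support_eq_cons p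
    rcases Nat.lt_or_ge (k+1) n with hk1 | hk1
    · rw [Nat.mod_eq_of_lt hk1]
      rw [List.getD_eq_getElem _ _ (by omega), List.getD_eq_getElem _ _ (by omega)]
      have h := hconseq (k+1) (by omega)
      rw [List.getElem_tail, List.getElem_tail]
      exact h
    · have hkn : k = n - 1 := by omega
      have hmod : (k+1) % n = 0 := by rw [show k+1 = n from by omega, Nat.mod_self]
      rw [hmod]
      rw [List.getD_eq_getElem _ _ (by omega), List.getD_eq_getElem _ _ (by omega)]
      have hlast : p.support.tail[k]'(by omega) = a := by
        have h2 := SimpleGraph.Walk.getLast_support p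
        rw [List.getLast_eq_getElem] at h2
        calc p.support.tail[k]'(by omega) = p.support[k+1]'(by omega) := List.getElem_tail _
          _ = p.support[p.support.length - 1]'(by omega) := getElem_idx_congr (by omega) _
          _ = a := h2
      rw [hlast]
      have h := hconseq 0 (by omega)
      have h0 : p.support[0] = a := by
        rw [List.getElem_zero]
        exact SimpleGraph.Walk.head_support p
      rw [h0] at h
      have h1 : p.support[0+1] = p.support.tail[0] := (List.getElem_tail (by omega)).symm
      rw [h1] at h
      exact h

end CMPHam

/-- A complete multipartite graph on `n ≥ 3` vertices whose largest part has
size `m` is Hamiltonian if and only if `m ≤ n/2`. -/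
theorem completeMultipartite_hamiltonian_iff {ι : Type} [Fintype ι]
    (V : ι → Type) [∀ i, Fintype (V i)] [DecidableEq (Σ i, V i)] (n m : ℕ)
    (hn : n = Fintype.card (Σ i, V i)) (hn3 : 3 ≤ n)
    (hmax : ∀ i, Fintype.card (V i) ≤ m)
    (hex : ∃ i, Fintype.card (V i) = m) :
    (SimpleGraph.completeMultipartiteGraph V).IsHamiltonian ↔ 2 * m ≤ n := by
  classical
  constructor
  · -- Hamiltonian → 2 * m ≤ n
    intro hG
    obtain ⟨i₀, hi₀⟩ := hex
    obtain ⟨f, hinj, hsurj, hadj⟩ :=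
      CMPHam.exists_cycleFn_of_isHamiltonian hn.symm hn3 hG
    set A := (Finset.range n).filter (fun t => (f t).1 = i₀) with hA
    set B := (Finset.range n).filter (fun t => ¬ (f t).1 = i₀) with hB
    have hAB : A.card + B.card = n := by
      rw [hA, hB, Finset.card_filter_add_card_filter_not, Finset.card_range]
    have hmA : m ≤ A.card := by
      rw [← hi₀]
      have hmaps : ∀ u : V i₀, (hsurj ⟨i₀, u⟩).choose ∈ A := by
        intro u
        obtain ⟨h1, h2⟩ := (hsurj ⟨i₀, u⟩).choose_spec
        rw [hA]
        simp only [Finset.mem_filter, Finset.mem_range]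
        exact ⟨h1, by rw [h2]⟩
      have : Fintype.card (V i₀) = (Finset.univ : Finset (V i₀)).card := rfl
      rw [this]
      refine Finset.card_le_card_of_injOn (fun u => (hsurj ⟨i₀, u⟩).choose)
        (fun u _ => hmaps u) ?_
      intro u _ u' _ he
      simp only at he
      have h1 := (hsurj ⟨i₀, u⟩).choose_spec.2
      have h2 := (hsurj ⟨i₀, u'⟩).choose_spec.2
      rw [he, h2] at h1
      have : u' = u := by simpa using h1
      exact this.symm
    have hAcB : A.card ≤ B.card := by
      refine Finset.card_le_card_of_injOn (fun t => (t+1) % n) ?_ ?_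
      · intro t ht
        simp only [Finset.mem_coe, hA, Finset.mem_filter, Finset.mem_range] at ht
        obtain ⟨htn, hti⟩ := ht
        have hne : (f t).1 ≠ (f ((t+1) % n)).1 := by
          have h := hadj t htn
          rw [SimpleGraph.comap_adj, SimpleGraph.top_adj] at h
          exact h
        rw [hB]
        simp only [Finset.mem_coe, Finset.mem_filter, Finset.mem_range]
        exact ⟨Nat.mod_lt _ (by omega), fun hc => hne (by rw [hti, hc])⟩
      · intro t ht t' ht' he
        simp only [Finset.mem_coe, hA, Finset.mem_filter, Finset.mem_range] at ht ht'
        simp only at he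
        exact CMPHam.mod_succ_inj ht.1 ht'.1 he
    omega
  · -- 2 * m ≤ n → Hamiltonian
    intro h2m
    obtain ⟨i₀, hi₀⟩ := hex
    have hne : Nonempty (Σ i, V i) := by
      rw [← Fintype.card_pos_iff, ← hn]; omega
    haveI : Nonempty ι := hne.elim (fun x => ⟨x.1⟩)
    set κ := Fintype.card ι with hκ
    set e0 := Fintype.equivFin ι with he0
    set eι : ι ≃ Fin κ := e0.trans (Equiv.swap (e0 i₀) 0) with heι
    have heι0 : eι i₀ = 0 := by
      rw [heι]; simp [Equiv.swap_apply_left]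
    set a : Fin κ → ℕ := fun j => Fintype.card (V (eι.symm j)) with ha
    have hκ0 : 0 < κ := Fintype.card_pos
    have ha0 : a ⟨0, hκ0⟩ = m := by
      have h00 : (⟨0, hκ0⟩ : Fin κ) = eι i₀ := by rw [heι0]; rfl
      rw [h00]
      simp only [ha]
      rw [Equiv.symm_apply_apply, hi₀]
    set off : ι → ℕ := fun i => ∑ j ∈ Finset.univ.filter (· < eι i), a j with hoff
    have hsum : ∑ j : Fin κ, a j = n := by
      rw [hn, Fintype.card_sigma]
      exact Equiv.sum_comp eι.symm (fun i => Fintype.card (V i))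
    have hsz : ∀ i : ι, a (eι i) = Fintype.card (V i) := by
      intro i
      simp only [ha]
      rw [Equiv.symm_apply_apply]
    have hblock : ∀ i : ι, off i + a (eι i) ≤ n := by
      intro i
      have h1 : off i + a (eι i) = ∑ j ∈ insert (eι i) (Finset.univ.filter (· < eι i)), a j := by
        rw [Finset.sum_insert (by simp), add_comm]
      rw [h1, ← hsum]
      exact Finset.sum_le_sum_of_subset (Finset.subset_univ _)
    have hord : ∀ x y : ι, eι x < eι y → off x + a (eι x) ≤ off y := by
      intro x y hxy
      have h1 : off x + a (eι x) = ∑ j ∈ insert (eι x) (Finset.univ.filter (· < eι x)), a j := by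
        rw [Finset.sum_insert (by simp), add_comm]
      rw [h1]
      refine Finset.sum_le_sum_of_subset ?_
      intro j hj
      simp only [Finset.mem_insert, Finset.mem_filter, Finset.mem_univ, true_and] at hj ⊢
      rcases hj with rfl | hj
      · exact hxy
      · exact lt_trans hj hxy
    have hoff0 : ∀ i : ι, off i = 0 ∨ m ≤ off i := by
      intro i
      rcases eq_or_ne (eι i) 0 with h | h
      · left
        simp only [hoff]
        rw [h]
        rw [Finset.filter_false_of_mem (fun j _ => by simp [Fin.le_zero_iff])]
        exact Finset.sum_empty
      · right
        rw [← ha0]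
        refine Finset.single_le_sum (fun j _ => Nat.zero_le _) ?_
        simp only [Finset.mem_filter, Finset.mem_univ, true_and]
        have : (⟨0, hκ0⟩ : Fin κ) = 0 := rfl
        rw [this]
        exact (Fin.pos_iff_ne_zero' _).mpr h
    set eV : ∀ i, V i ≃ Fin (Fintype.card (V i)) := fun i => Fintype.equivFin (V i) with heV
    set pos : (Σ i, V i) → ℕ := fun x => off x.1 + (eV x.1 x.2 : ℕ) with hposd
    have hposlb : ∀ x : Σ i, V i, off x.1 ≤ pos x := fun x => Nat.le_add_right _ _
    have hposub : ∀ x : Σ i, V i, pos x < off x.1 + Fintype.card (V x.1) := by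
      intro x
      have := (eV x.1 x.2).isLt
      simp only [hposd]
      omega
    have hposn : ∀ x, pos x < n := by
      intro x
      have h1 := hposub x
      have h2 := hblock x.1
      rw [hsz] at h2
      omega
    have hposinj : Function.Injective pos := by
      intro x y hxy
      rcases lt_trichotomy (eι x.1) (eι y.1) with h | h | h
      · exfalso
        have h1 := hord x.1 y.1 h
        have h2 := hposub x
        have h3 := hposlb y
        rw [hsz] at h1
        omega
      · obtain ⟨i, u⟩ := x
        obtain ⟨i', u'⟩ := y
        have hfst : i = i' := eι.injective h
        subst hfst
        simp only [hposd] at hxy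
        have : (eV i u : ℕ) = (eV i u' : ℕ) := by omega
        have : u = u' := (eV i).injective (Fin.val_injective this)
        rw [this]
      · exfalso
        have h1 := hord y.1 x.1 h
        have h2 := hposub y
        have h3 := hposlb x
        rw [hsz] at h1
        omega
    have hbij : Function.Bijective (fun x => (⟨pos x, hposn x⟩ : Fin n)) := by
      rw [Fintype.bijective_iff_injective_and_card]
      constructor
      · intro x y hxy
        simp only [Fin.mk.injEq] at hxy
        exact hposinj hxy
      · rw [Fintype.card_fin, hn]
    set E : (Σ i, V i) ≃ Fin n := Equiv.ofBijective _ hbij with hE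
    have hEpos : ∀ x, (E x : ℕ) = pos x := fun x => rfl
    set sig : ℕ → ℕ := fun t => if t % 2 = 0 then t / 2 else (n+1)/2 + t/2 with hsig
    have hsiglt : ∀ t, t < n → sig t < n := by
      intro t ht
      simp only [hsig]
      split <;> omega
    have hsiginj : ∀ s t, s < n → t < n → sig s = sig t → s = t := by
      intro s t hs ht h
      simp only [hsig] at h
      split at h <;> split at h <;> omega
    have hn0 : 0 < n := by omega
    set f : ℕ → Σ i, V i := fun t => E.symm ⟨sig (t % n), hsiglt _ (Nat.mod_lt _ hn0)⟩ with hf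
    have hposf : ∀ t, t < n → pos (f t) = sig t := by
      intro t ht
      simp only [hf]
      rw [← hEpos, Equiv.apply_symm_apply]
      show sig (t % n) = sig t
      rw [Nat.mod_eq_of_lt ht]
    refine CMPHam.isHamiltonian_of_cycleFn hn.symm hn3 f ?_ ?_ ?_
    · intro s t hs ht hst
      refine hsiginj s t hs ht ?_
      rw [← hposf s hs, ← hposf t ht, hst]
    · intro x
      have hqn : pos x < n := hposn x
      have hex2 : ∃ t, t < n ∧ sig t = pos x := by
        rcases Nat.lt_or_ge (pos x) ((n+1)/2) with h | h
        · refine ⟨2 * pos x, by omega, ?_⟩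
          simp only [hsig]
          rw [if_pos (by omega)]
          omega
        · refine ⟨2 * (pos x - (n+1)/2) + 1, by omega, ?_⟩
          simp only [hsig]
          rw [if_neg (by omega)]
          omega
      obtain ⟨t, ht, hts⟩ := hex2
      refine ⟨t, ht, ?_⟩
      apply E.injective
      simp only [hf]
      rw [Equiv.apply_symm_apply]
      refine Fin.ext ?_
      show sig (t % n) = (E x : ℕ)
      rw [Nat.mod_eq_of_lt ht, hts, hEpos]
    · intro k hk
      have hk1n : (k+1) % n < n := Nat.mod_lt _ hn0
      have hnefst : (f k).1 ≠ (f ((k+1) % n)).1 := by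
        intro hfst
        set x := f k with hx
        set y := f ((k+1) % n) with hy
        have hp1 : off x.1 ≤ pos x := hposlb x
        have hp2 : pos x < off x.1 + Fintype.card (V x.1) := hposub x
        have hp3 : off x.1 ≤ pos y := by rw [hfst]; exact hposlb y
        have hp4 : pos y < off x.1 + Fintype.card (V x.1) := by rw [hfst]; exact hposub y
        have hm' : Fintype.card (V x.1) ≤ m := hmax x.1
        have hcases := hoff0 x.1
        have hpx : pos x = sig k := hposf k hk
        have hpy : pos y = sig ((k+1) % n) := hposf _ hk1n
        have hsig_even : ∀ t, t % 2 = 0 → sig t = t / 2 := by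
          intro t h; simp only [hsig]; rw [if_pos h]
        have hsig_odd : ∀ t, ¬ (t % 2 = 0) → sig t = (n+1)/2 + t/2 := by
          intro t h; simp only [hsig]; rw [if_neg h]
        rcases hcases with hc0 | hc0 <;>
          rcases Nat.lt_or_ge (k+1) n with hklt | hkge <;>
          [skip; skip; skip; skip] <;>
          first
          | (have hmod : (k+1) % n = k+1 := Nat.mod_eq_of_lt hklt
             rw [hmod] at hpy
             by_cases hpar : k % 2 = 0
             · rw [hsig_even k hpar] at hpx
               rw [hsig_odd (k+1) (by omega)] at hpy
               omega
             · rw [hsig_odd k hpar] at hpx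
               rw [hsig_even (k+1) (by omega)] at hpy
               omega)
          | (have hkn : k + 1 = n := by omega
             have hmod : (k+1) % n = 0 := by rw [hkn, Nat.mod_self]
             rw [hmod] at hpy
             rw [hsig_even 0 (by omega)] at hpy
             by_cases hpar : k % 2 = 0
             · rw [hsig_even k hpar] at hpx
               omega
             · rw [hsig_odd k hpar] at hpx
               omega)
      rw [SimpleGraph.comap_adj, SimpleGraph.top_adj]
      exact hnefst
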